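/- arXiv:2502.19914 — 5 statements merged into one kernel-verified Lean document; each statement's English description precedes it below -/
import Mathlib

section
/- The power graph of a finite group G is complete if and only if G is cyclic of order 1 or cyclic of prime power order p^m for some prime p and positive integer m. -/
open Polynomial

/-- The power graph of a group: distinct `x, y` are adjacent iff one is an
integral power of the other. -/
def powerGraph (G : Type*) [Group G] : SimpleGraph G where
  Adj x y := x ≠ y ∧ (x ∈ Subgroup.zpowers y ∨ y ∈ Subgroup.zpowers x)
  symm := ⟨fun _ _ h => ⟨h.1.symm, h.2.symm⟩⟩
  loopless := ⟨fun _ h => h.1 rfl⟩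

private lemma pow_gcd_mem_zpowers {G : Type*} [Group G] (g : G) (i : ℕ) :
    g ^ Nat.gcd i (orderOf g) ∈ Subgroup.zpowers (g ^ i) := by
  have hgo : (g : G) ^ (orderOf g : ℤ) = 1 := by
    rw [zpow_natCast]; exact pow_orderOf_eq_one g
  have hbez := Nat.gcd_eq_gcd_ab i (orderOf g)
  refine Subgroup.mem_zpowers_iff.mpr ⟨Nat.gcdA i (orderOf g), ?_⟩
  rw [← zpow_natCast g i, ← zpow_mul, ← zpow_natCast g (Nat.gcd i (orderOf g)), hbez,
    zpow_add, zpow_mul, zpow_mul g ((orderOf g : ℤ)), hgo, one_zpow, mul_one]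

private lemma mem_zpowers_of_le {G : Type*} [Group G] (g : G) {p a b : ℕ} (hab : a ≤ b)
    {x y : G} (hax : g ^ p ^ a ∈ Subgroup.zpowers x)
    (hyb : y ∈ Subgroup.zpowers (g ^ p ^ b)) : y ∈ Subgroup.zpowers x := by
  have h1 : g ^ p ^ b ∈ Subgroup.zpowers (g ^ p ^ a) := by
    have : (g ^ p ^ a) ^ p ^ (b - a) = g ^ p ^ b := by
      rw [← pow_mul, ← pow_add, Nat.add_sub_cancel' hab]
    exact this ▸ Subgroup.pow_mem _ (Subgroup.mem_zpowers _) _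
  exact (Subgroup.zpowers_le.mpr hax) ((Subgroup.zpowers_le.mpr h1) hyb)

/-- The power graph of a finite group `G` is complete iff `G` is cyclic of order `1`
or cyclic of prime power order. -/
theorem powerGraph_complete_iff (G : Type*) [Group G] [Fintype G] :
    (∀ x y : G, x ≠ y → (powerGraph G).Adj x y) ↔
      (IsCyclic G ∧ (Fintype.card G = 1 ∨
        ∃ p m : ℕ, p.Prime ∧ 0 < m ∧ Fintype.card G = p ^ m)) := by
  constructor
  · intro h
    -- choose an element of maximal order
    obtain ⟨g, -, hg⟩ := Finset.exists_max_image (Finset.univ : Finset G) orderOf ⟨1, Finset.mem_univ 1⟩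
    have hcyc : ∀ x : G, x ∈ Subgroup.zpowers g := by
      intro x
      by_cases hx : x = g
      · subst hx; exact Subgroup.mem_zpowers x
      rcases (h x g hx).2 with h1 | h2
      · exact h1
      · have hle : Subgroup.zpowers g ≤ Subgroup.zpowers x := Subgroup.zpowers_le.mpr h2
        have heq : Subgroup.zpowers g = Subgroup.zpowers x := by
          apply Subgroup.eq_of_le_of_card_ge hle
          rw [Nat.card_zpowers, Nat.card_zpowers]
          exact hg x (Finset.mem_univ x)
        rw [heq]; exact Subgroup.mem_zpowers x
    have hC : IsCyclic G := ⟨g, hcyc⟩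
    refine ⟨hC, ?_⟩
    by_cases h1 : Fintype.card G = 1
    · exact Or.inl h1
    right
    set n := Fintype.card G with hn
    have hn1 : 1 < n := lt_of_le_of_ne Fintype.card_pos (Ne.symm h1)
    obtain ⟨p, hp, hpd⟩ := Nat.exists_prime_and_dvd h1
    refine ⟨p, n.factorization p, hp, ?_, ?_⟩
    · exact Nat.Prime.factorization_pos_of_dvd hp (by omega) hpd
    · by_contra hne
      have hcompl : n = p ^ n.factorization p * (n / p ^ n.factorization p) :=
        (Nat.ordProj_mul_ordCompl_eq_self n p).symm
      have hq1 : n / p ^ n.factorization p ≠ 1 := by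
        intro hq1; rw [hq1, mul_one] at hcompl; exact hne hcompl
      obtain ⟨q, hq, hqd⟩ := Nat.exists_prime_and_dvd hq1
      have hqn : q ∣ n := hqd.trans (Nat.ordCompl_dvd n p)
      have hqp : q ≠ p := fun hqp =>
        (Nat.not_dvd_ordCompl hp (by omega)) (hqp ▸ hqd)
      haveI : Fact p.Prime := ⟨hp⟩
      haveI : Fact q.Prime := ⟨hq⟩
      obtain ⟨x, hx⟩ := exists_prime_orderOf_dvd_card p hpd
      obtain ⟨y, hy⟩ := exists_prime_orderOf_dvd_card q hqn
      have hxy : x ≠ y := by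
        intro hxy; rw [hxy, hy] at hx; exact hqp hx
      rcases (h x y hxy).2 with hm | hm
      · have := orderOf_dvd_of_mem_zpowers hm
        rw [hx, hy] at this
        exact hqp ((Nat.prime_dvd_prime_iff_eq hp hq).mp this).symm
      · have := orderOf_dvd_of_mem_zpowers hm
        rw [hx, hy] at this
        exact hqp ((Nat.prime_dvd_prime_iff_eq hq hp).mp this)
  · rintro ⟨hC, hcard⟩ x y hxy
    rcases hcard with h1 | ⟨p, m, hp, hm, hpm⟩
    · haveI := Fintype.card_le_one_iff_subsingleton.mp h1.le
      exact absurd (Subsingleton.elim x y) hxy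
    refine ⟨hxy, ?_⟩
    obtain ⟨g, hg⟩ := hC.exists_generator
    have hord : orderOf g = p ^ m := by
      rw [orderOf_eq_card_of_forall_mem_zpowers hg, Nat.card_eq_fintype_card, hpm]
    obtain ⟨i, hi⟩ := Submonoid.mem_powers_iff x g |>.mp (mem_powers_iff_mem_zpowers.mpr (hg x))
    obtain ⟨j, hj⟩ := Submonoid.mem_powers_iff y g |>.mp (mem_powers_iff_mem_zpowers.mpr (hg y))
    have hdi := Nat.gcd_dvd_right i (orderOf g)
    have hdj := Nat.gcd_dvd_right j (orderOf g)
    rw [hord] at hdi hdj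
    obtain ⟨a, ha, hga⟩ := (Nat.dvd_prime_pow hp).mp hdi
    obtain ⟨b, hb, hgb⟩ := (Nat.dvd_prime_pow hp).mp hdj
    rw [← hord] at hga hgb
    have hax : g ^ p ^ a ∈ Subgroup.zpowers x := by
      rw [← hi, ← hga]; exact pow_gcd_mem_zpowers g i
    have hby : g ^ p ^ b ∈ Subgroup.zpowers y := by
      rw [← hj, ← hgb]; exact pow_gcd_mem_zpowers g j
    have hxa : x ∈ Subgroup.zpowers (g ^ p ^ a) := by
      rw [← hga, ← hi]
      have : (g ^ Nat.gcd i (orderOf g)) ^ (i / Nat.gcd i (orderOf g)) = g ^ i := by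
        rw [← pow_mul, Nat.mul_div_cancel' (Nat.gcd_dvd_left i (orderOf g))]
      exact this ▸ Subgroup.pow_mem _ (Subgroup.mem_zpowers _) _
    have hyb : y ∈ Subgroup.zpowers (g ^ p ^ b) := by
      rw [← hgb, ← hj]
      have : (g ^ Nat.gcd j (orderOf g)) ^ (j / Nat.gcd j (orderOf g)) = g ^ j := by
        rw [← pow_mul, Nat.mul_div_cancel' (Nat.gcd_dvd_left j (orderOf g))]
      exact this ▸ Subgroup.pow_mem _ (Subgroup.mem_zpowers _) _
    rcases le_total a b with hab | hab
    · exact Or.inr (mem_zpowers_of_le g hab hax hyb)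
    · exact Or.inl (mem_zpowers_of_le g hab hby hxa)
end

section
/- Let p and q be distinct primes. In the power graph of the dihedral group D_{2pq}, the identity has degree 2pq - 1, each rotation of order pq has degree pq - 1, each rotation of order q has degree pq - p, each rotation of order p has degree pq - q, and each reflection has degree 1. -/
open Polynomial

namespace PGAux

open DihedralGroup AddSubgroup

variable {n : ℕ}

lemma r_inj : Function.Injective (DihedralGroup.r (n := n)) := fun _ _ h => r.inj h

lemma r_pow (i : ZMod n) (k : ℕ) : (r i) ^ k = r (k • i) := by
  induction k with
  | zero => rw [pow_zero, zero_nsmul, one_def]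
  | succ k ih => rw [pow_succ, ih, r_mul_r, succ_nsmul]

lemma r_inv (i : ZMod n) : (r i)⁻¹ = r (-i) := by
  apply inv_eq_of_mul_eq_one_right
  rw [r_mul_r, add_neg_cancel, one_def]

lemma r_zpow (i : ZMod n) (k : ℤ) : (r i) ^ k = r (k • i) := by
  cases k with
  | ofNat m => rw [Int.ofNat_eq_coe, zpow_natCast, r_pow, natCast_zsmul]
  | negSucc m => rw [zpow_negSucc, r_pow, r_inv, negSucc_zsmul]

lemma r_mem_zpowers_r {i j : ZMod n} :
    r j ∈ Subgroup.zpowers (r i) ↔ j ∈ zmultiples i := by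
  simp only [Subgroup.mem_zpowers_iff, mem_zmultiples_iff, r_zpow]
  exact exists_congr fun k => ⟨fun h => r_inj h, fun h => congrArg r h⟩

lemma sr_not_mem_zpowers_r (i j : ZMod n) : sr j ∉ Subgroup.zpowers (r i) := by
  intro h
  rw [Subgroup.mem_zpowers_iff] at h
  obtain ⟨k, hk⟩ := h
  rw [r_zpow] at hk
  exact absurd hk (by simp)

lemma mem_zpowers_sr {i : ZMod n} {x : DihedralGroup n} :
    x ∈ Subgroup.zpowers (sr i) ↔ x = 1 ∨ x = sr i := by
  constructor
  · intro h
    rw [Subgroup.mem_zpowers_iff] at h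
    obtain ⟨k, rfl⟩ := h
    have h2 : (sr i) ^ (2 : ℤ) = 1 := by
      rw [zpow_two, sr_mul_self]
    rcases Int.even_or_odd k with ⟨m, rfl⟩ | ⟨m, rfl⟩
    · left
      rw [← two_mul, zpow_mul, h2, one_zpow]
    · right
      rw [zpow_add, zpow_mul, h2, one_zpow, one_mul, zpow_one]
  · rintro (rfl | rfl)
    · exact Subgroup.one_mem _
    · exact Subgroup.mem_zpowers _

/-- `r` as a monoid hom from `Multiplicative (ZMod n)`. -/
def rHom : Multiplicative (ZMod n) →* DihedralGroup n where
  toFun j := r j.toAdd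
  map_one' := rfl
  map_mul' a b := by
    show r (a.toAdd + b.toAdd) = r a.toAdd * r b.toAdd
    rw [r_mul_r]

lemma orderOf_r_eq_addOrderOf (i : ZMod n) : orderOf (r i) = addOrderOf i := by
  have h := orderOf_injective (rHom (n := n))
    (fun a b hab => by
      have := r_inj hab
      exact Multiplicative.toAdd.injective this) (Multiplicative.ofAdd i)
  simp at h; exact h

/-- The candidate neighbor set inside an additive group. -/
def ZSet {M : Type*} [AddGroup M] (u : M) : Set M :=
  {x | u ≠ x ∧ (u ∈ zmultiples x ∨ x ∈ zmultiples u)}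

lemma mem_zmultiples_equiv {M N : Type*} [AddGroup M] [AddGroup N] (e : M ≃+ N) {a b : M} :
    e a ∈ zmultiples (e b) ↔ a ∈ zmultiples b := by
  simp only [mem_zmultiples_iff]
  constructor
  · rintro ⟨k, hk⟩
    exact ⟨k, e.injective (by rw [map_zsmul, hk])⟩
  · rintro ⟨k, hk⟩
    exact ⟨k, by rw [← map_zsmul, hk]⟩

lemma ZSet_equiv {M N : Type*} [AddGroup M] [AddGroup N] (e : M ≃+ N) (u : M) :
    ZSet (e u) = e '' ZSet u := by
  ext y
  obtain ⟨x, rfl⟩ := e.surjective y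
  simp only [ZSet, Set.mem_setOf_eq, Set.mem_image]
  constructor
  · rintro ⟨h1, h2⟩
    refine ⟨x, ⟨fun h => h1 (congrArg e h), ?_⟩, rfl⟩
    rcases h2 with h | h
    · exact Or.inl ((mem_zmultiples_equiv e).mp h)
    · exact Or.inr ((mem_zmultiples_equiv e).mp h)
  · rintro ⟨x', ⟨h1, h2⟩, hx⟩
    obtain rfl : x' = x := e.injective hx
    refine ⟨fun h => h1 (e.injective h), ?_⟩
    rcases h2 with h | h
    · exact Or.inl ((mem_zmultiples_equiv e).mpr h)
    · exact Or.inr ((mem_zmultiples_equiv e).mpr h)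

lemma neighborSet_r (i : ZMod n) (hi : i ≠ 0) :
    (powerGraph (DihedralGroup n)).neighborSet (r i) = r '' ZSet i := by
  ext x
  cases x with
  | r j =>
    simp only [SimpleGraph.mem_neighborSet, powerGraph, ZSet, Set.mem_image]
    constructor
    · rintro ⟨h1, h2⟩
      refine ⟨j, ⟨fun h => h1 (congrArg r h), ?_⟩, rfl⟩
      rcases h2 with h | h
      · exact Or.inl (r_mem_zpowers_r.mp h)
      · exact Or.inr (r_mem_zpowers_r.mp h)
    · rintro ⟨j', ⟨h1, h2⟩, hj⟩
      obtain rfl : j' = j := r_inj hj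
      refine ⟨fun h => h1 (r_inj h), ?_⟩
      rcases h2 with h | h
      · exact Or.inl (r_mem_zpowers_r.mpr h)
      · exact Or.inr (r_mem_zpowers_r.mpr h)
  | sr j =>
    simp only [SimpleGraph.mem_neighborSet, powerGraph, Set.mem_image]
    constructor
    · rintro ⟨h1, h2⟩
      rcases h2 with h | h
      · rcases mem_zpowers_sr.mp h with h' | h'
        · exact absurd (r_inj (h'.trans one_def)) hi
        · exact absurd h' (by simp)
      · exact absurd h (sr_not_mem_zpowers_r i j)
    · rintro ⟨j', _, hj⟩
      exact absurd hj (by simp)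

end PGAux

namespace PGAux

lemma ncard_compl_singleton {α : Type*} [Fintype α] (a : α) :
    ({a}ᶜ : Set α).ncard = Nat.card α - 1 := by
  have h := Set.ncard_add_ncard_compl ({a} : Set α)
  rw [Set.ncard_singleton] at h
  omega

lemma countB (p q : ℕ) (hp : p.Prime) (hq : q.Prime) (hpq : p ≠ q) (b : ZMod q) (hb : b ≠ 0) :
    (ZSet ((0 : ZMod p), b)).ncard = p * q - p := by
  haveI : NeZero p := ⟨hp.ne_zero⟩
  haveI : NeZero q := ⟨hq.ne_zero⟩
  haveI : Fact p.Prime := ⟨hp⟩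
  haveI : Fact q.Prime := ⟨hq⟩
  set u : ZMod p × ZMod q := ((0 : ZMod p), b) with hu
  have hset : ZSet u = {x : ZMod p × ZMod q | x.1 = 0 ∨ x.2 ≠ 0} \ {u} := by
    ext x
    simp only [ZSet, Set.mem_setOf_eq, Set.mem_diff, Set.mem_singleton_iff]
    constructor
    · rintro ⟨h1, h2⟩
      refine ⟨?_, fun h => h1 h.symm⟩
      rcases h2 with h | h
      · rw [AddSubgroup.mem_zmultiples_iff] at h
        obtain ⟨k, hk⟩ := h
        right
        intro hx2
        have : b = 0 := by
          have := congrArg Prod.snd hk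
          simp only [Prod.smul_snd, hu] at this
          rw [hx2, smul_zero] at this
          exact this.symm
        exact hb this
      · rw [AddSubgroup.mem_zmultiples_iff] at h
        obtain ⟨k, hk⟩ := h
        left
        have := congrArg Prod.fst hk
        simp only [Prod.smul_fst, hu, smul_zero] at this
        exact this.symm
    · rintro ⟨h1, h2⟩
      refine ⟨fun h => h2 h.symm, ?_⟩
      rcases h1 with h | h
      · -- x = (0, x.2), so x ∈ zmultiples u
        right
        have hx2 : x.2 ∈ AddSubgroup.zmultiples b :=
          mem_zmultiples_of_prime_card (Nat.card_zmod q) hb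
        rw [AddSubgroup.mem_zmultiples_iff] at hx2 ⊢
        obtain ⟨k, hk⟩ := hx2
        exact ⟨k, by
          ext
          · simp [hu, h]
          · simpa [hu] using hk⟩
      · -- x.2 ≠ 0, so u ∈ zmultiples x
        left
        have hpx2 : p • x.2 ≠ 0 := by
          rw [nsmul_eq_mul]
          intro h0
          rcases mul_eq_zero.mp h0 with h' | h'
          · rw [ZMod.natCast_eq_zero_iff] at h'
            exact hpq ((Nat.prime_dvd_prime_iff_eq hq hp).mp h').symm
          · exact h h'
        obtain ⟨k, hk⟩ := AddSubgroup.mem_zmultiples_iff.mp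
          (mem_zmultiples_of_prime_card (G := ZMod q) (Nat.card_zmod q) hpx2 (g' := b))
        rw [AddSubgroup.mem_zmultiples_iff]
        refine ⟨k * (p : ℤ), ?_⟩
        have h1 : (k * (p : ℤ)) • x.1 = 0 := by
          rw [mul_smul, natCast_zsmul, nsmul_eq_mul, ZMod.natCast_self, zero_mul, smul_zero]
        have h2 : (k * (p : ℤ)) • x.2 = b := by
          rw [mul_smul, natCast_zsmul]
          exact hk
        ext
        · simp only [hu]; exact h1
        · simp [hu] at h2 ⊢; exact h2
  have humem : u ∈ {x : ZMod p × ZMod q | x.1 = 0 ∨ x.2 ≠ 0} := Or.inl rfl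
  have hcompl : ({x : ZMod p × ZMod q | x.1 = 0 ∨ x.2 ≠ 0})ᶜ
      = (fun a : ZMod p => (a, (0 : ZMod q))) '' {0}ᶜ := by
    ext x
    simp only [Set.mem_compl_iff, Set.mem_setOf_eq, not_or, not_not, Set.mem_image,
      Set.mem_singleton_iff, Prod.ext_iff]
    constructor
    · rintro ⟨h1, h2⟩
      exact ⟨x.1, h1, rfl, h2.symm⟩
    · rintro ⟨a, ha, h1, h2⟩
      exact ⟨h1 ▸ ha, h2.symm⟩
  have hinj : Function.Injective (fun a : ZMod p => (a, (0 : ZMod q))) :=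
    fun a b h => (Prod.ext_iff.mp h).1
  have hcc : ({x : ZMod p × ZMod q | x.1 = 0 ∨ x.2 ≠ 0})ᶜ.ncard = p - 1 := by
    rw [hcompl, Set.ncard_image_of_injective _ hinj, ncard_compl_singleton, Nat.card_zmod]
  have htot := Set.ncard_add_ncard_compl {x : ZMod p × ZMod q | x.1 = 0 ∨ x.2 ≠ 0}
  rw [Nat.card_prod, Nat.card_zmod, Nat.card_zmod, hcc] at htot
  rw [hset, Set.ncard_diff_singleton_of_mem humem]
  have hple : p ≤ p * q := Nat.le_mul_of_pos_right p hq.pos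
  have := hp.two_le
  omega

end PGAux


/-- Degrees in the power graph of the dihedral group `D_{2pq}`. -/
theorem degrees_powerGraph_dihedral (p q : ℕ) (hp : p.Prime) (hq : q.Prime) (hpq : p ≠ q) :
    ((powerGraph (DihedralGroup (p * q))).neighborSet 1).ncard = 2 * p * q - 1 ∧
    (∀ i : ZMod (p * q), orderOf (DihedralGroup.r i) = p * q →
      ((powerGraph (DihedralGroup (p * q))).neighborSet (DihedralGroup.r i)).ncard
        = p * q - 1) ∧
    (∀ i : ZMod (p * q), orderOf (DihedralGroup.r i) = q →
      ((powerGraph (DihedralGroup (p * q))).neighborSet (DihedralGroup.r i)).ncard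
        = p * q - p) ∧
    (∀ i : ZMod (p * q), orderOf (DihedralGroup.r i) = p →
      ((powerGraph (DihedralGroup (p * q))).neighborSet (DihedralGroup.r i)).ncard
        = p * q - q) ∧
    (∀ i : ZMod (p * q),
      ((powerGraph (DihedralGroup (p * q))).neighborSet (DihedralGroup.sr i)).ncard = 1) := by
  haveI : Fact p.Prime := ⟨hp⟩
  haveI : Fact q.Prime := ⟨hq⟩
  haveI : NeZero p := ⟨hp.ne_zero⟩
  haveI : NeZero q := ⟨hq.ne_zero⟩
  haveI : NeZero (p * q) := ⟨Nat.mul_ne_zero hp.ne_zero hq.ne_zero⟩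
  have hco : Nat.Coprime p q := (Nat.coprime_primes hp hq).mpr hpq
  let e : ZMod (p * q) ≃+ ZMod p × ZMod q := (ZMod.chineseRemainder hco).toAddEquiv
  refine ⟨?_, ?_, ?_, ?_, ?_⟩
  · -- identity
    have h : (powerGraph (DihedralGroup (p * q))).neighborSet 1 = {1}ᶜ := by
      ext x
      simp only [SimpleGraph.mem_neighborSet, powerGraph, Set.mem_compl_iff,
        Set.mem_singleton_iff]
      constructor
      · rintro ⟨h1, _⟩
        exact fun h' => h1 h'.symm
      · intro h'
        exact ⟨fun h'' => h' h''.symm, Or.inl (Subgroup.one_mem _)⟩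
    rw [h, PGAux.ncard_compl_singleton, DihedralGroup.nat_card, ← mul_assoc]
  · -- rotations of order pq
    intro i hord
    have hi : i ≠ 0 := by
      rintro rfl
      rw [← DihedralGroup.one_def, orderOf_one] at hord
      exact Nat.Prime.ne_one hp (by
        have := hord.symm
        have h2 := hq.one_lt
        nlinarith [hp.one_lt])
    rw [PGAux.neighborSet_r i hi, Set.ncard_image_of_injective _ PGAux.r_inj]
    have haddi : addOrderOf i = p * q := by
      rw [← PGAux.orderOf_r_eq_addOrderOf]; exact hord
    have htop : AddSubgroup.zmultiples i = ⊤ :=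
      AddSubgroup.eq_top_of_card_eq _
        (by rw [Nat.card_zmultiples, haddi, Nat.card_zmod])
    have hz : PGAux.ZSet i = {i}ᶜ := by
      ext x
      simp only [PGAux.ZSet, Set.mem_setOf_eq, Set.mem_compl_iff, Set.mem_singleton_iff]
      constructor
      · rintro ⟨h1, _⟩
        exact fun h' => h1 h'.symm
      · intro h'
        exact ⟨fun h'' => h' h''.symm, Or.inr (htop ▸ AddSubgroup.mem_top x)⟩
    rw [hz, PGAux.ncard_compl_singleton, Nat.card_zmod]
  · -- rotations of order q
    intro i hord
    have hi : i ≠ 0 := by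
      rintro rfl
      rw [← DihedralGroup.one_def, orderOf_one] at hord
      exact hq.ne_one hord.symm
    rw [PGAux.neighborSet_r i hi, Set.ncard_image_of_injective _ PGAux.r_inj]
    have haddi : addOrderOf i = q := by
      rw [← PGAux.orderOf_r_eq_addOrderOf]; exact hord
    have him : (PGAux.ZSet (e i)).ncard = (PGAux.ZSet i).ncard := by
      rw [PGAux.ZSet_equiv e i]
      exact Set.ncard_image_of_injective _ e.injective
    rw [← him]
    set u := e i with hu
    have huord : addOrderOf u = q :=
      (addOrderOf_injective e.toAddMonoidHom e.injective i).trans haddi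
    have hqu : q • u = 0 := by
      have h' := addOrderOf_nsmul_eq_zero u
      rwa [huord] at h' 
    have hu1 : u.1 = 0 := by
      have hd1 : addOrderOf u.1 ∣ q := by
        apply addOrderOf_dvd_of_nsmul_eq_zero
        have := congrArg Prod.fst hqu
        simpa using this
      have hd2 : addOrderOf u.1 ∣ p := by
        apply addOrderOf_dvd_of_nsmul_eq_zero
        rw [nsmul_eq_mul, ZMod.natCast_self, zero_mul]
      have : addOrderOf u.1 = 1 := Nat.dvd_one.mp (hco ▸ Nat.dvd_gcd hd2 hd1)
      exact AddMonoid.addOrderOf_eq_one_iff.mp this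
    have hu2 : u.2 ≠ 0 := by
      intro h
      have h0 : u = 0 := Prod.ext hu1 h
      rw [h0, addOrderOf_zero] at huord
      exact hq.ne_one huord.symm
    have hue : u = ((0 : ZMod p), u.2) := by rw [← hu1]
    rw [hue]
    exact PGAux.countB p q hp hq hpq u.2 hu2
  · -- rotations of order p
    intro i hord
    have hi : i ≠ 0 := by
      rintro rfl
      rw [← DihedralGroup.one_def, orderOf_one] at hord
      exact hp.ne_one hord.symm
    rw [PGAux.neighborSet_r i hi, Set.ncard_image_of_injective _ PGAux.r_inj]
    have haddi : addOrderOf i = p := by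
      rw [← PGAux.orderOf_r_eq_addOrderOf]; exact hord
    have him : (PGAux.ZSet (e i)).ncard = (PGAux.ZSet i).ncard := by
      rw [PGAux.ZSet_equiv e i]
      exact Set.ncard_image_of_injective _ e.injective
    rw [← him]
    set u := e i with hu
    have huord : addOrderOf u = p :=
      (addOrderOf_injective e.toAddMonoidHom e.injective i).trans haddi
    have hqu : p • u = 0 := by
      have h' := addOrderOf_nsmul_eq_zero u
      rwa [huord] at h' 
    have hu2 : u.2 = 0 := by
      have hd1 : addOrderOf u.2 ∣ p := by
        apply addOrderOf_dvd_of_nsmul_eq_zero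
        have := congrArg Prod.snd hqu
        simpa using this
      have hd2 : addOrderOf u.2 ∣ q := by
        apply addOrderOf_dvd_of_nsmul_eq_zero
        rw [nsmul_eq_mul, ZMod.natCast_self, zero_mul]
      have : addOrderOf u.2 = 1 := Nat.dvd_one.mp (hco ▸ Nat.dvd_gcd hd1 hd2)
      exact AddMonoid.addOrderOf_eq_one_iff.mp this
    have hu1 : u.1 ≠ 0 := by
      intro h
      have h0 : u = 0 := Prod.ext h hu2
      rw [h0, addOrderOf_zero] at huord
      exact hp.ne_one huord.symm
    have h2 : (PGAux.ZSet (((AddEquiv.prodComm : ZMod p × ZMod q ≃+ ZMod q × ZMod p)) u)).ncard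
        = (PGAux.ZSet u).ncard := by
      rw [PGAux.ZSet_equiv]
      exact Set.ncard_image_of_injective _ ((AddEquiv.prodComm : ZMod p × ZMod q ≃+ ZMod q × ZMod p)).injective
    rw [← h2]
    have hue : ((AddEquiv.prodComm : ZMod p × ZMod q ≃+ ZMod q × ZMod p)) u = ((0 : ZMod q), u.1) := by
      show (u.2, u.1) = ((0 : ZMod q), u.1)
      rw [hu2]
    rw [hue, PGAux.countB q p hq hp hpq.symm u.1 hu1, mul_comm]
  · -- reflections
    intro i
    have h : (powerGraph (DihedralGroup (p * q))).neighborSet (DihedralGroup.sr i) = {1} := by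
      ext x
      simp only [SimpleGraph.mem_neighborSet, powerGraph, Set.mem_singleton_iff]
      constructor
      · rintro ⟨h1, h2⟩
        rcases h2 with h' | h'
        · cases x with
          | r j =>
            exact absurd h' (PGAux.sr_not_mem_zpowers_r j i)
          | sr j =>
            rcases PGAux.mem_zpowers_sr.mp h' with h'' | h''
            · exact absurd h'' (by simp [-DihedralGroup.r_zero, DihedralGroup.one_def])
            · exact absurd h'' (fun h3 => h1 (DihedralGroup.sr.inj h3 ▸ rfl))
        · rcases PGAux.mem_zpowers_sr.mp h' with h'' | h''
          · exact h''
          · exact absurd h''.symm h1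
      · rintro rfl
        exact ⟨by simp [-DihedralGroup.r_zero, DihedralGroup.one_def], Or.inr (Subgroup.one_mem _)⟩
    rw [h, Set.ncard_singleton]
end

section
/- Let p and q be distinct primes. The adjacency matrix of the power graph of D_{2pq} has eigenvalue 0 with multiplicity at least pq - 1 and eigenvalue -1 with multiplicity at least pq - 4. -/
open Polynomial

section AbstractMult

lemma charpoly_comp_X_add_C {V : Type*} [Fintype V] [DecidableEq V]
    (A : Matrix V V ℝ) (μ : ℝ) :
    (A.charpoly).comp (X + C μ) = (A - μ • 1).charpoly := by
  have h : (A.charpoly).comp (X + C μ)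
      = ((((aeval (X + C μ) : ℝ[X] →ₐ[ℝ] ℝ[X]) : ℝ[X] →+* ℝ[X]).mapMatrix
          (Matrix.charmatrix A))).det := by
    rw [Matrix.charpoly, comp_eq_aeval, ← RingHom.coe_coe, RingHom.map_det]
  rw [h, Matrix.charpoly]
  congr 1
  ext i j
  rcases eq_or_ne i j with rfl | hij
  · simp [Matrix.charmatrix_apply_eq, Matrix.one_apply, Matrix.sub_apply]
    ring
  · simp [Matrix.charmatrix_apply_ne _ _ _ hij, Matrix.one_apply_ne hij, Matrix.sub_apply]

lemma card_le_rootMultiplicity {V : Type*} {ι : Type*} [Fintype V] [DecidableEq V] [Fintype ι]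
    (A : Matrix V V ℝ) (μ : ℝ) (v : ι → V → ℝ) (hli : LinearIndependent ℝ v)
    (he : ∀ i, A.mulVec (v i) = μ • v i) :
    Fintype.card ι ≤ A.charpoly.rootMultiplicity μ := by
  set B := A - μ • (1 : Matrix V V ℝ) with hB
  have hBv : ∀ i, B.mulVec (v i) = 0 := by
    intro i
    rw [hB, Matrix.sub_mulVec, he i, Matrix.smul_mulVec, Matrix.one_mulVec, sub_self]
  set φ := Matrix.toLin' B with hφ
  have hker : ∀ i, v i ∈ LinearMap.ker φ := by
    intro i
    simp [hφ, Matrix.toLin'_apply, hBv i]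
  have h1 : Fintype.card ι ≤ Module.finrank ℝ (LinearMap.ker φ) := by
    let w : ι → LinearMap.ker φ := fun i => ⟨v i, hker i⟩
    have : LinearIndependent ℝ w :=
      LinearIndependent.of_comp (LinearMap.ker φ).subtype hli
    exact this.fintype_card_le_finrank
  have h2 : LinearMap.ker φ ≤ Module.End.maxGenEigenspace φ 0 := by
    rw [← Module.End.eigenspace_zero]
    exact (Module.End.genEigenspace φ 0).monotone le_top
  have h3 : Module.finrank ℝ (LinearMap.ker φ)
      ≤ Module.finrank ℝ (Module.End.maxGenEigenspace φ 0) :=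
    Submodule.finrank_mono h2
  have h4 : Module.finrank ℝ (Module.End.maxGenEigenspace φ 0)
      = natTrailingDegree (LinearMap.charpoly φ) :=
    LinearMap.finrank_maxGenEigenspace_zero_eq φ
  have h5 : LinearMap.charpoly φ = B.charpoly := by
    rw [← LinearMap.charpoly_toMatrix φ (Pi.basisFun ℝ V), LinearMap.toMatrix_eq_toMatrix',
      LinearMap.toMatrix'_toLin']
  have h6 : A.charpoly.rootMultiplicity μ = natTrailingDegree B.charpoly := by
    rw [rootMultiplicity_eq_rootMultiplicity, charpoly_comp_X_add_C,
      rootMultiplicity_eq_natTrailingDegree']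
  rw [h5] at h4
  rw [h6]
  omega

lemma single_sub_single_li {V : Type*} {ι : Type*} [Fintype V] [DecidableEq V] [Fintype ι]
    (x b : ι → V) (hx : Function.Injective x) (hxb : ∀ i j, x i ≠ b j) :
    LinearIndependent ℝ (fun i => (Pi.single (x i) (1 : ℝ) : V → ℝ) - Pi.single (b i) 1) := by
  rw [Fintype.linearIndependent_iff]
  intro g hg i
  have h := congrFun hg (x i)
  simp only [Finset.sum_apply, Pi.smul_apply, Pi.sub_apply, Pi.single_apply, smul_eq_mul,
    Pi.zero_apply] at h
  rw [Finset.sum_eq_single i (fun j _ hji => by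
      rw [if_neg (fun hh => hji ((hx hh).symm)), if_neg (hxb i j)]; ring)
    (fun hh => absurd (Finset.mem_univ i) hh)] at h
  simpa [hxb i i] using h

lemma eigen_zero_of_twins {V : Type*} [Fintype V] [DecidableEq V] (G : SimpleGraph V)
    [DecidableRel G.Adj] (x y : V)
    (h : ∀ z, G.Adj z x ↔ G.Adj z y) :
    (G.adjMatrix ℝ).mulVec (Pi.single x 1 - Pi.single y 1)
      = (0 : ℝ) • (Pi.single x 1 - Pi.single y 1) := by
  funext z
  rw [Matrix.mulVec_sub]
  simp only [Matrix.mulVec_single_one, Matrix.col_apply, Pi.sub_apply, mul_one, SimpleGraph.adjMatrix_apply,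
    Pi.smul_apply, zero_smul, smul_eq_mul]
  rw [if_congr (h z) rfl rfl, sub_self, zero_mul]

lemma eigen_neg_one_of_twins {V : Type*} [Fintype V] [DecidableEq V] (G : SimpleGraph V)
    [DecidableRel G.Adj] (x y : V) (hadj : G.Adj x y)
    (h : ∀ z, z ≠ x → z ≠ y → (G.Adj z x ↔ G.Adj z y)) :
    (G.adjMatrix ℝ).mulVec (Pi.single x 1 - Pi.single y 1)
      = (-1 : ℝ) • (Pi.single x 1 - Pi.single y 1) := by
  have hxy : x ≠ y := G.ne_of_adj hadj
  funext z
  rw [Matrix.mulVec_sub]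
  simp only [Matrix.mulVec_single_one, Matrix.col_apply, Pi.sub_apply, mul_one, SimpleGraph.adjMatrix_apply,
    Pi.smul_apply, smul_eq_mul, Pi.single_apply]
  rcases eq_or_ne z x with rfl | hzx
  · rw [if_neg (G.loopless.irrefl z), if_pos hadj, if_pos rfl, if_neg hxy]
    ring
  · rcases eq_or_ne z y with rfl | hzy
    · rw [if_pos hadj.symm, if_neg (G.loopless.irrefl z), if_neg (fun hh : z = x => hzx hh),
        if_pos rfl]
      ring
    · rw [if_congr (h z hzx hzy) rfl rfl, if_neg hzx, if_neg hzy]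
      ring

end AbstractMult

section Dihedral

open DihedralGroup

variable {n : ℕ}

lemma r_zpow (a : ZMod n) (k : ℤ) : (r a : DihedralGroup n) ^ k = r (k • a) := by
  have hnat : ∀ m : ℕ, (r a : DihedralGroup n) ^ m = r (m • a) := by
    intro m
    induction m with
    | zero => simp
    | succ m ih => rw [pow_succ, ih, r_mul_r, succ_nsmul]
  rcases k with m | m
  · simpa using hnat m
  · rw [zpow_negSucc, hnat, inv_eq_iff_mul_eq_one, r_mul_r, one_def]
    congr 1
    have h1 : (Int.negSucc m) • a = -(((m + 1 : ℕ) : ℤ) • a) := by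
      rw [← neg_smul]
      congr 1
    rw [h1, natCast_zsmul, add_neg_cancel]

lemma r_mem_zpowers_r {a b : ZMod n} :
    (r b : DihedralGroup n) ∈ Subgroup.zpowers (r a) ↔ b ∈ AddSubgroup.zmultiples a := by
  simp only [Subgroup.mem_zpowers_iff, AddSubgroup.mem_zmultiples_iff, _root_.r_zpow, r.injEq]

lemma sr_not_mem_zpowers_r {a b : ZMod n} :
    (sr b : DihedralGroup n) ∉ Subgroup.zpowers (r a) := by
  intro h
  rw [Subgroup.mem_zpowers_iff] at h
  obtain ⟨k, hk⟩ := h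
  rw [_root_.r_zpow] at hk
  simp at hk

lemma mem_zpowers_sr {a : ZMod n} {z : DihedralGroup n}
    (hz : z ∈ Subgroup.zpowers (sr a)) : z = 1 ∨ z = sr a := by
  rw [Subgroup.mem_zpowers_iff] at hz
  obtain ⟨k, hk⟩ := hz
  have h2 : (sr a : DihedralGroup n) ^ (2 : ℤ) = 1 := by
    rw [show (2:ℤ) = (2:ℕ) from rfl, zpow_natCast, pow_two, sr_mul_self]
  rcases Int.even_or_odd k with ⟨m, hm⟩ | ⟨m, hm⟩
  · left
    rw [← hk, hm, show m + m = 2 * m by ring, zpow_mul, h2, one_zpow]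
  · right
    rw [← hk, hm, zpow_add, zpow_mul, h2, one_zpow, zpow_one, one_mul]

lemma adj_sr_iff (i : ZMod n) (z : DihedralGroup n) :
    (powerGraph (DihedralGroup n)).Adj z (sr i) ↔ z = 1 := by
  constructor
  · rintro ⟨hne, h | h⟩
    · rcases mem_zpowers_sr h with h1 | h1
      · exact h1
      · exact absurd h1 hne
    · cases z with
      | r j => exact absurd h sr_not_mem_zpowers_r
      | sr j =>
          rcases mem_zpowers_sr h with h1 | h1
          · exact absurd h1 (by simp [one_def, -r_zero])
          · exact absurd (by injection h1 with hh; rw [hh]) hne.symm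
  · rintro rfl
    exact ⟨by simp [one_def, -r_zero], Or.inl (Subgroup.one_mem _)⟩

lemma adj_r_r_iff (j w : ZMod n) :
    (powerGraph (DihedralGroup n)).Adj (r j) (r w) ↔
      r j ≠ r w ∧ (j ∈ AddSubgroup.zmultiples w ∨ w ∈ AddSubgroup.zmultiples j) := by
  constructor
  · rintro ⟨hne, h⟩
    exact ⟨hne, h.imp r_mem_zpowers_r.mp r_mem_zpowers_r.mp⟩
  · rintro ⟨hne, h⟩
    exact ⟨hne, h.imp r_mem_zpowers_r.mpr r_mem_zpowers_r.mpr⟩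

end Dihedral

section Arith

lemma zmultiples_eq_gcd {n : ℕ} [NeZero n] (a : ZMod n) :
    AddSubgroup.zmultiples a = AddSubgroup.zmultiples ((Nat.gcd a.val n : ℕ) : ZMod n) := by
  apply le_antisymm
  · rw [AddSubgroup.zmultiples_le]
    refine ⟨((a.val / Nat.gcd a.val n : ℕ) : ℤ), ?_⟩
    show ((a.val / Nat.gcd a.val n : ℕ) : ℤ) • ((Nat.gcd a.val n : ℕ) : ZMod n) = a
    rw [natCast_zsmul, nsmul_eq_mul]
    rw [← Nat.cast_mul, Nat.div_mul_cancel (Nat.gcd_dvd_left _ _)]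
    exact ZMod.natCast_rightInverse a
  · rw [AddSubgroup.zmultiples_le]
    refine ⟨Nat.gcdA a.val n, ?_⟩
    show (Nat.gcdA a.val n) • a = ((Nat.gcd a.val n : ℕ) : ZMod n)
    have hb := Nat.gcd_eq_gcd_ab a.val n
    have h2 := congrArg (fun z : ℤ => (z : ZMod n)) hb
    simp only [Int.cast_add, Int.cast_mul, Int.cast_natCast, ZMod.natCast_self, zero_mul,
      add_zero] at h2
    rw [zsmul_eq_mul, ZMod.natCast_rightInverse a] at *
    rw [h2]
    ring
lemma gcd_cases {p q : ℕ} (hp : p.Prime) (hq : q.Prime) (d : ℕ) (hd : d ∣ p * q)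
    (hne : d ≠ p * q) : d = 1 ∨ d = p ∨ d = q := by
  by_cases hpd : p ∣ d
  · obtain ⟨e, rfl⟩ := hpd
    have he : e ∣ q := (Nat.mul_dvd_mul_iff_left hp.pos).mp hd
    rcases hq.eq_one_or_self_of_dvd e he with rfl | rfl
    · right; left; simp
    · exact absurd rfl hne
  · have hcop : Nat.Coprime d p := (Nat.Prime.coprime_iff_not_dvd hp |>.mpr hpd).symm
    have hdq : d ∣ q := hcop.dvd_of_dvd_mul_left hd
    rcases hq.eq_one_or_self_of_dvd d hdq with rfl | rfl
    · left; rfl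
    · right; right; rfl

end Arith

open DihedralGroup

open scoped Classical in
/-- Eigenvalue multiplicity lower bounds for the adjacency matrix of the power graph
of `D_{2pq}`. -/
theorem adj_eigen_mult (p q : ℕ) (hp : p.Prime) (hq : q.Prime) (hpq : p ≠ q)
    [NeZero (p * q)] :
    p * q - 1 ≤
        (((powerGraph (DihedralGroup (p * q))).adjMatrix ℝ).charpoly).rootMultiplicity 0 ∧
    p * q - 4 ≤
        (((powerGraph (DihedralGroup (p * q))).adjMatrix ℝ).charpoly).rootMultiplicity (-1) := by
  have hp2 : 2 ≤ p := hp.two_le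
  have hq2 : 2 ≤ q := hq.two_le
  have hplt : p < p * q := (lt_mul_iff_one_lt_right hp.pos).mpr hq.one_lt
  have hqlt : q < p * q := (lt_mul_iff_one_lt_left hq.pos).mpr hp.one_lt
  have h1lt : 1 < p * q := lt_of_lt_of_le hp.one_lt (Nat.le_mul_of_pos_right _ hq.pos)
  have hv0 : (0 : ZMod (p * q)).val = 0 := ZMod.val_zero
  have hv1 : (1 : ZMod (p * q)).val = 1 := by
    rw [← Nat.cast_one, ZMod.val_cast_of_lt h1lt]
  have hvp : ((p : ℕ) : ZMod (p * q)).val = p := ZMod.val_cast_of_lt hplt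
  have hvq : ((q : ℕ) : ZMod (p * q)).val = q := ZMod.val_cast_of_lt hqlt
  have hne : ∀ a b : ZMod (p * q), a.val ≠ b.val → a ≠ b := fun a b h hh => h (by rw [hh])
  have d01 : (0 : ZMod (p * q)) ≠ 1 := hne _ _ (by rw [hv0, hv1]; omega)
  have d0p : (0 : ZMod (p * q)) ≠ (p : ℕ) := hne _ _ (by rw [hv0, hvp]; omega)
  have d0q : (0 : ZMod (p * q)) ≠ (q : ℕ) := hne _ _ (by rw [hv0, hvq]; omega)
  have d1p : (1 : ZMod (p * q)) ≠ (p : ℕ) := hne _ _ (by rw [hv1, hvp]; omega)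
  have d1q : (1 : ZMod (p * q)) ≠ (q : ℕ) := hne _ _ (by rw [hv1, hvq]; omega)
  have dpq : ((p : ℕ) : ZMod (p * q)) ≠ (q : ℕ) := hne _ _ (by rw [hvp, hvq]; omega)
  constructor
  · -- eigenvalue 0
    have hcard : Fintype.card {i : ZMod (p * q) // i ≠ 0} = p * q - 1 := by
      have h := Fintype.card_subtype_compl (fun i : ZMod (p * q) => i = 0)
      rw [Fintype.card_subtype_eq, ZMod.card] at h
      exact h
    refine le_trans ?_ (card_le_rootMultiplicity _ 0
      (fun i : {i : ZMod (p * q) // i ≠ 0} =>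
        (Pi.single (sr i.1) (1 : ℝ) : DihedralGroup (p * q) → ℝ) - Pi.single (sr 0) 1)
      ?_ ?_)
    · rw [hcard]
    · exact single_sub_single_li _ _
        (fun i j h => Subtype.ext (by injection h))
        (fun i j h => i.2 (by injection h))
    · intro i
      exact eigen_zero_of_twins _ _ _ (fun z => by rw [adj_sr_iff, adj_sr_iff])
  · -- eigenvalue -1
    set s : Finset (ZMod (p * q)) := {0, 1, ((p : ℕ) : ZMod (p * q)), ((q : ℕ) : ZMod (p * q))}
      with hs
    have hscard : s.card = 4 := by
      rw [hs, Finset.card_insert_of_notMem (by simp [d01, d0p, d0q]),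
        Finset.card_insert_of_notMem (by simp [d1p, d1q]),
        Finset.card_insert_of_notMem (by simp [dpq]), Finset.card_singleton]
    have hcard2 : Fintype.card {u : ZMod (p * q) // u ∉ s} = p * q - 4 := by
      have h := Fintype.card_subtype_compl (fun u : ZMod (p * q) => u ∈ s)
      rw [ZMod.card] at h
      have h2 : Fintype.card {u : ZMod (p * q) // u ∈ s} = s.card := Fintype.card_coe s
      rw [h2, hscard] at h
      exact h
    have key : ∀ u : {u : ZMod (p * q) // u ∉ s},
        AddSubgroup.zmultiples u.1
            = AddSubgroup.zmultiples ((Nat.gcd u.1.val (p * q) : ℕ) : ZMod (p * q))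
          ∧ ((Nat.gcd u.1.val (p * q) : ℕ) : ZMod (p * q)) ∈ s
          ∧ ((Nat.gcd u.1.val (p * q) : ℕ) : ZMod (p * q)) ≠ 0 := by
      intro u
      have hu0 : u.1 ≠ 0 := fun h => u.2 (by rw [h, hs]; simp)
      have hval0 : u.1.val ≠ 0 := fun h => hu0 ((ZMod.val_eq_zero u.1).mp h)
      have hdvd : Nat.gcd u.1.val (p * q) ∣ p * q := Nat.gcd_dvd_right _ _
      have hdne : Nat.gcd u.1.val (p * q) ≠ p * q := by
        intro h
        have hdl : (p * q) ∣ u.1.val := by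
          conv_lhs => rw [← h]
          exact Nat.gcd_dvd_left _ _
        exact hval0 (Nat.eq_zero_of_dvd_of_lt hdl (ZMod.val_lt u.1))
      refine ⟨zmultiples_eq_gcd u.1, ?_, ?_⟩
      · rcases gcd_cases hp hq _ hdvd hdne with h | h | h <;> rw [h, hs] <;> simp
      · rcases gcd_cases hp hq _ hdvd hdne with h | h | h <;> rw [h]
        · rw [Nat.cast_one]; exact d01.symm
        · exact d0p.symm
        · exact d0q.symm
    refine le_trans ?_ (card_le_rootMultiplicity _ (-1)
      (fun u : {u : ZMod (p * q) // u ∉ s} =>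
        (Pi.single (r u.1) (1 : ℝ) : DihedralGroup (p * q) → ℝ)
          - Pi.single (r ((Nat.gcd u.1.val (p * q) : ℕ) : ZMod (p * q))) 1)
      ?_ ?_)
    · rw [hcard2]
    · refine single_sub_single_li _ _
        (fun i j h => Subtype.ext (by injection h)) (fun i j h => ?_)
      have : i.1 = ((Nat.gcd j.1.val (p * q) : ℕ) : ZMod (p * q)) := by injection h
      exact i.2 (this ▸ (key j).2.1)
    · intro u
      obtain ⟨hZ, hmem, hb0⟩ := key u
      have hu0 : u.1 ≠ 0 := fun h => u.2 (by rw [h, hs]; simp)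
      have hub : u.1 ≠ ((Nat.gcd u.1.val (p * q) : ℕ) : ZMod (p * q)) :=
        fun h => u.2 (h ▸ hmem)
      apply eigen_neg_one_of_twins
      · refine ⟨fun h => hub (by injection h), Or.inr ?_⟩
        rw [r_mem_zpowers_r, hZ]
        exact AddSubgroup.mem_zmultiples _
      · intro z hzx hzy
        cases z with
        | sr j =>
            constructor <;> intro hadj <;> exfalso
            · have h1 := ((powerGraph (DihedralGroup (p * q))).adj_comm _ _).mp hadj
              have h2 := (adj_sr_iff _ _).mp h1
              rw [one_def] at h2
              exact hu0 (by injection h2)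
            · have h1 := ((powerGraph (DihedralGroup (p * q))).adj_comm _ _).mp hadj
              have h2 := (adj_sr_iff _ _).mp h1
              rw [one_def] at h2
              exact hb0 (by injection h2)
        | r j =>
            rw [adj_r_r_iff, adj_r_r_iff]
            constructor
            · rintro ⟨-, h⟩
              refine ⟨hzy, ?_⟩
              rcases h with h | h
              · rw [hZ] at h
                exact Or.inl h
              · refine Or.inr ?_
                have hle : AddSubgroup.zmultiples u.1 ≤ AddSubgroup.zmultiples j :=
                  AddSubgroup.zmultiples_le.mpr h
                rw [hZ] at hle
                exact hle (AddSubgroup.mem_zmultiples _)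
            · rintro ⟨-, h⟩
              refine ⟨hzx, ?_⟩
              rcases h with h | h
              · rw [← hZ] at h
                exact Or.inl h
              · refine Or.inr ?_
                have hle : AddSubgroup.zmultiples
                    ((Nat.gcd u.1.val (p * q) : ℕ) : ZMod (p * q))
                      ≤ AddSubgroup.zmultiples j :=
                  AddSubgroup.zmultiples_le.mpr h
                rw [← hZ] at hle
                exact hle (AddSubgroup.mem_zmultiples _)
end

section
/- Let n ≥ 3 and suppose n is not a prime power. Then the power graph of the dihedral group D_{2n} contains two nonidentity rotations that are not adjacent; hence the induced subgraph on the rotation subgroup ⟨a⟩ is not complete. -/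
open Polynomial

lemma orderOf_r_div (n : ℕ) [NeZero n] (p : ℕ) (hp : p.Prime) (hdvd : p ∣ n) :
    orderOf (DihedralGroup.r ((n / p : ℕ) : ZMod n)) = p := by
  have hn0 : 0 < n := Nat.pos_of_ne_zero (NeZero.ne n)
  have hlt : n / p < n := Nat.div_lt_self hn0 hp.one_lt
  rw [DihedralGroup.orderOf_r]
  rw [ZMod.val_natCast_of_lt hlt]
  have hgcd : Nat.gcd n (n / p) = n / p :=
    Nat.gcd_eq_right (Nat.div_dvd_of_dvd hdvd)
  rw [hgcd, Nat.div_div_self hdvd hn0.ne']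

/-- If `n ≥ 3` is not a prime power, then the power graph of `D_{2n}` contains two
distinct nonidentity rotations that are not adjacent; hence the induced subgraph on
the rotation subgroup is not complete. -/
theorem exists_nonadjacent_rotations (n : ℕ) (hn : 3 ≤ n) (h : ¬ IsPrimePow n) :
    ∃ i j : ZMod n,
      DihedralGroup.r i ≠ (1 : DihedralGroup n) ∧
      DihedralGroup.r j ≠ (1 : DihedralGroup n) ∧
      DihedralGroup.r i ≠ DihedralGroup.r j ∧
      ¬ (powerGraph (DihedralGroup n)).Adj (DihedralGroup.r i) (DihedralGroup.r j) := by
  have hn0 : n ≠ 0 := by omega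
  haveI : NeZero n := ⟨hn0⟩
  -- get two distinct primes dividing n
  have hp : n.minFac.Prime := Nat.minFac_prime (by omega)
  have hpd : n.minFac ∣ n := Nat.minFac_dvd n
  have : ∃ q, q.Prime ∧ q ∣ n ∧ q ≠ n.minFac := by
    by_contra hq
    push_neg at hq
    exact h (isPrimePow_iff_unique_prime_dvd.2
      ⟨n.minFac, ⟨hp, hpd⟩, fun q ⟨h1, h2⟩ => hq q h1 h2⟩)
  obtain ⟨q, hq, hqd, hqne⟩ := this
  set p := n.minFac
  refine ⟨((n / p : ℕ) : ZMod n), ((n / q : ℕ) : ZMod n), ?_, ?_, ?_, ?_⟩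
  · intro h1
    have := orderOf_r_div n p hp hpd
    rw [h1, orderOf_one] at this
    exact hp.one_lt.ne this
  · intro h1
    have := orderOf_r_div n q hq hqd
    rw [h1, orderOf_one] at this
    exact hq.one_lt.ne this
  · intro h1
    apply hqne
    have h2 := orderOf_r_div n p hp hpd
    have h3 := orderOf_r_div n q hq hqd
    rw [h1, h3] at h2
    exact h2
  · rintro ⟨-, hmem | hmem⟩
    · have := orderOf_dvd_of_mem_zpowers hmem
      rw [orderOf_r_div n p hp hpd, orderOf_r_div n q hq hqd] at this
      exact hqne ((Nat.prime_dvd_prime_iff_eq hp hq).1 this).symm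
    · have := orderOf_dvd_of_mem_zpowers hmem
      rw [orderOf_r_div n p hp hpd, orderOf_r_div n q hq hqd] at this
      exact hqne ((Nat.prime_dvd_prime_iff_eq hq hp).1 this)
end

section
/- Let p and q be distinct primes. The trace of the square of the adjacency matrix of the power graph of D_{2pq} (which equals twice the number of edges) equals (2pq - 1) + (p-1)(q-1)(pq-1) + (q-1)(pq-p) + (p-1)(pq-q) + pq, and this equals the sum of the squares of all adjacency eigenvalues. -/
open Polynomial

section Auxiliary

open scoped Classical
open DihedralGroup

variable {n : ℕ}

private lemma aux_r_pow (j : ZMod n) (k : ℕ) :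
    (r j : DihedralGroup n) ^ k = r ((k : ZMod n) * j) := by
  induction k with
  | zero => simp only [pow_zero, Nat.cast_zero, zero_mul]; rfl
  | succ k ih => rw [pow_succ, ih, r_mul_r]; congr 1; push_cast; ring

private lemma aux_r_inv (j : ZMod n) : (r j : DihedralGroup n)⁻¹ = r (-j) := rfl

private lemma aux_r_zpow (j : ZMod n) (k : ℤ) :
    (r j : DihedralGroup n) ^ k = r ((k : ZMod n) * j) := by
  cases k with
  | ofNat m => rw [Int.ofNat_eq_coe, zpow_natCast, aux_r_pow]; congr 1; push_cast; ring
  | negSucc m => rw [zpow_negSucc, aux_r_pow, aux_r_inv]; congr 1; push_cast; ring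

private lemma mem_zpowers_r_iff (i j : ZMod n) :
    (r i : DihedralGroup n) ∈ Subgroup.zpowers (r j) ↔ j ∣ i := by
  rw [Subgroup.mem_zpowers_iff]
  constructor
  · rintro ⟨k, hk⟩
    rw [aux_r_zpow] at hk
    exact ⟨(k : ZMod n), (r.inj hk).symm.trans (mul_comm _ _)⟩
  · rintro ⟨c, rfl⟩
    obtain ⟨k, rfl⟩ := ZMod.intCast_surjective c
    exact ⟨k, by rw [aux_r_zpow, mul_comm]⟩

private lemma not_sr_mem_zpowers_r (i j : ZMod n) :
    (sr i : DihedralGroup n) ∉ Subgroup.zpowers (r j) := by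
  rw [Subgroup.mem_zpowers_iff]
  rintro ⟨k, hk⟩
  rw [aux_r_zpow] at hk
  exact absurd hk (by simp)

private lemma aux_sr_zsq (j : ZMod n) : (sr j : DihedralGroup n) ^ (2:ℤ) = 1 := by
  rw [zpow_two, sr_mul_self]

private lemma mem_zpowers_sr_s17 (x : DihedralGroup n) (j : ZMod n) :
    x ∈ Subgroup.zpowers (sr j) ↔ x = 1 ∨ x = sr j := by
  rw [Subgroup.mem_zpowers_iff]
  constructor
  · rintro ⟨k, hk⟩
    rcases Int.even_or_odd k with ⟨m, hm⟩ | ⟨m, hm⟩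
    · left; rw [← hk, hm, ← two_mul, zpow_mul]; norm_num [aux_sr_zsq, sq, sr_mul_self]
    · right; rw [← hk, hm, zpow_add, zpow_mul]; norm_num [aux_sr_zsq, sq, sr_mul_self]
  · rintro (rfl | rfl)
    exacts [⟨0, rfl⟩, ⟨1, zpow_one _⟩]

private lemma field_dvd_iff {F} [Field F] (a b : F) : a ∣ b ↔ (a = 0 → b = 0) := by
  constructor
  · rintro ⟨c, rfl⟩ rfl; simp
  · intro h
    by_cases ha : a = 0
    · rw [h ha]; exact dvd_zero a
    · exact (IsUnit.mk0 a ha).dvd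

private lemma sum_ind_zero (k : ℕ) [NeZero k] :
    ∑ a : ZMod k, (if a = 0 then (1:ℝ) else 0) = 1 := by simp

private lemma sum_ind_ne (k : ℕ) [NeZero k] :
    ∑ a : ZMod k, (if a ≠ 0 then (1:ℝ) else 0) = k - 1 := by
  have h : ∀ a : ZMod k, (if a ≠ 0 then (1:ℝ) else 0) = 1 - (if a = 0 then 1 else 0) := by
    intro a; by_cases h : a = 0 <;> simp [h]
  simp only [h, Finset.sum_sub_distrib, sum_ind_zero, Finset.sum_const, Finset.card_univ,
    ZMod.card, nsmul_eq_mul, mul_one]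

private lemma bad_sum (p q : ℕ) (hp : p.Prime) (hq : q.Prime) (hpq : p ≠ q) [NeZero (p*q)] :
    ∑ i : ZMod (p*q), ∑ j : ZMod (p*q), (if ¬ j ∣ i ∧ ¬ i ∣ j then (1:ℝ) else 0)
      = 2 * ((p:ℝ) - 1) * ((q:ℝ) - 1) := by
  haveI : Fact p.Prime := ⟨hp⟩
  haveI : Fact q.Prime := ⟨hq⟩
  haveI : NeZero p := ⟨hp.ne_zero⟩
  haveI : NeZero q := ⟨hq.ne_zero⟩
  have hco : Nat.Coprime p q := (Nat.coprime_primes hp hq).mpr hpq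
  let e := ZMod.chineseRemainder hco
  have hdvd : ∀ a b : ZMod (p*q), a ∣ b ↔ e a ∣ e b := by
    intro a b
    constructor
    · exact fun h => map_dvd e.toRingHom h
    · intro h
      have := map_dvd e.symm.toRingHom h
      simpa using this
  rw [Fintype.sum_equiv e.toEquiv _
      (fun x => ∑ y : ZMod p × ZMod q, (if ¬ y ∣ x ∧ ¬ x ∣ y then (1:ℝ) else 0)) (by
    intro i
    refine Fintype.sum_equiv e.toEquiv _ _ (fun j => ?_)
    simp only [hdvd]
    rfl)]
  have key : ∀ x y : ZMod p × ZMod q, (if ¬ y ∣ x ∧ ¬ x ∣ y then (1:ℝ) else 0)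
      = ((if x.1 = 0 then (1:ℝ) else 0) * (if x.2 ≠ 0 then 1 else 0))
          * ((if y.1 ≠ 0 then (1:ℝ) else 0) * (if y.2 = 0 then 1 else 0))
        + ((if x.1 ≠ 0 then (1:ℝ) else 0) * (if x.2 = 0 then 1 else 0))
          * ((if y.1 = 0 then (1:ℝ) else 0) * (if y.2 ≠ 0 then 1 else 0)) := by
    rintro ⟨a, b⟩ ⟨c, d⟩
    simp only [Prod.mk_dvd_mk, field_dvd_iff]
    by_cases h1 : a = 0 <;> by_cases h2 : b = 0 <;> by_cases h3 : c = 0 <;>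
      by_cases h4 : d = 0 <;> simp [h1, h2, h3, h4]
  simp only [key, Finset.sum_add_distrib, ← Finset.sum_mul, ← Finset.mul_sum]
  have fact : ∀ (f : ZMod p → ℝ) (g : ZMod q → ℝ),
      ∑ x : ZMod p × ZMod q, f x.1 * g x.2 = (∑ a, f a) * (∑ b, g b) := by
    intro f g
    rw [Finset.sum_mul_sum, Fintype.sum_prod_type]
  rw [fact (fun a => if a = 0 then (1:ℝ) else 0) (fun b => if b ≠ 0 then (1:ℝ) else 0),
      fact (fun a => if a ≠ 0 then (1:ℝ) else 0) (fun b => if b = 0 then (1:ℝ) else 0),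
      sum_ind_zero, sum_ind_ne, sum_ind_zero, sum_ind_ne]
  ring

private def dihedralSumEquiv (n : ℕ) : (ZMod n) ⊕ (ZMod n) ≃ DihedralGroup n where
  toFun i := match i with
    | Sum.inl j => r j
    | Sum.inr j => sr j
  invFun i := match i with
    | r j => Sum.inl j
    | sr j => Sum.inr j
  left_inv := by rintro (x | x) <;> rfl
  right_inv := by rintro (x | x) <;> rfl

private lemma sum_dihedral [NeZero n] {M : Type*} [AddCommMonoid M]
    (f : DihedralGroup n → M) :
    ∑ x, f x = (∑ i : ZMod n, f (r i)) + ∑ i : ZMod n, f (sr i) := by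
  rw [← Equiv.sum_comp (dihedralSumEquiv n) f, Fintype.sum_sum_type]
  rfl

private lemma adj_rr (i j : ZMod n) :
    (powerGraph (DihedralGroup n)).Adj (r i) (r j) ↔ i ≠ j ∧ (j ∣ i ∨ i ∣ j) := by
  show (r i ≠ r j ∧ _) ↔ _
  simp [mem_zpowers_r_iff]

private lemma adj_rs (i j : ZMod n) :
    (powerGraph (DihedralGroup n)).Adj (r i) (sr j) ↔ i = 0 := by
  show (r i ≠ sr j ∧ _) ↔ _
  simp [mem_zpowers_sr_s17, not_sr_mem_zpowers_r, -r_zero, one_def]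

private lemma adj_sr (i j : ZMod n) :
    (powerGraph (DihedralGroup n)).Adj (sr i) (r j) ↔ j = 0 := by
  rw [SimpleGraph.adj_comm, adj_rs]

private lemma adj_ss (i j : ZMod n) :
    ¬ (powerGraph (DihedralGroup n)).Adj (sr i) (sr j) := by
  rintro ⟨hne, h | h⟩ <;> rw [mem_zpowers_sr_s17] at h <;>
    rcases h with h | h <;> simp_all [-r_zero, one_def]

private theorem main_trace (p q : ℕ) (hp : p.Prime) (hq : q.Prime) (hpq : p ≠ q)
    [NeZero (p * q)] :
    Matrix.trace ((powerGraph (DihedralGroup (p * q))).adjMatrix ℝ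
        * (powerGraph (DihedralGroup (p * q))).adjMatrix ℝ)
      = ((2 * p * q - 1 : ℝ) + (p - 1) * (q - 1) * (p * q - 1) + (q - 1) * (p * q - p)
          + (p - 1) * (p * q - q) + p * q) := by
  set G := powerGraph (DihedralGroup (p * q)) with hG
  have step1 : Matrix.trace (G.adjMatrix ℝ * G.adjMatrix ℝ)
      = ∑ x : DihedralGroup (p*q), ∑ y : DihedralGroup (p*q),
          (if G.Adj x y then (1:ℝ) else 0) := by
    rw [Matrix.trace]
    refine Finset.sum_congr rfl (fun x _ => ?_)
    rw [Matrix.diag_apply, Matrix.mul_apply]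
    refine Finset.sum_congr rfl (fun y _ => ?_)
    by_cases h : G.Adj x y
    · simp [h, G.adj_comm x y, h.symm]
    · simp [h, fun hyx : G.Adj y x => h hyx.symm]
  have inner : ∀ x : DihedralGroup (p*q), ∑ y : DihedralGroup (p*q),
      (if G.Adj x y then (1:ℝ) else 0)
      = (∑ j : ZMod (p*q), if G.Adj x (r j) then (1:ℝ) else 0)
        + ∑ j : ZMod (p*q), (if G.Adj x (sr j) then (1:ℝ) else 0) :=
    fun x => sum_dihedral _
  rw [step1, sum_dihedral]
  simp only [inner]
  have hss : ∀ i j : ZMod (p*q), (if G.Adj (sr i) (sr j) then (1:ℝ) else 0) = 0 :=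
    fun i j => if_neg (adj_ss i j)
  have hrr' : ∀ i j : ZMod (p*q), (if G.Adj (r i) (r j) then (1:ℝ) else 0)
      = if i ≠ j ∧ (j ∣ i ∨ i ∣ j) then 1 else 0 :=
    fun i j => if_congr (adj_rr i j) rfl rfl
  have hrs' : ∀ i j : ZMod (p*q), (if G.Adj (r i) (sr j) then (1:ℝ) else 0)
      = if i = 0 then 1 else 0 :=
    fun i j => if_congr (adj_rs i j) rfl rfl
  have hsr' : ∀ i j : ZMod (p*q), (if G.Adj (sr i) (r j) then (1:ℝ) else 0)
      = if j = 0 then 1 else 0 :=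
    fun i j => if_congr (adj_sr i j) rfl rfl
  simp only [hrr', hrs', hsr', hss, Finset.sum_const_zero, add_zero,
    Finset.sum_add_distrib]
  have hrr : ∑ i : ZMod (p*q), ∑ j : ZMod (p*q),
      (if i ≠ j ∧ (j ∣ i ∨ i ∣ j) then (1:ℝ) else 0)
      = ((p*q : ℕ) : ℝ)^2 - ((p*q : ℕ) : ℝ) - 2 * ((p:ℝ) - 1) * ((q:ℝ) - 1) := by
    have key : ∀ i j : ZMod (p*q), (if i ≠ j ∧ (j ∣ i ∨ i ∣ j) then (1:ℝ) else 0)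
        = (1 - if i = j then 1 else 0) - (if ¬ j ∣ i ∧ ¬ i ∣ j then 1 else 0) := by
      intro i j
      by_cases h1 : i = j
      · subst h1; simp
      · by_cases h2 : j ∣ i <;> by_cases h3 : i ∣ j <;> simp [h1, h2, h3]
    simp only [key, Finset.sum_sub_distrib, bad_sum p q hp hq hpq]
    simp [Finset.sum_ite_eq, ZMod.card, Finset.card_univ]
    ring
  rw [hrr]
  have hrs : ∑ i : ZMod (p*q), ∑ _j : ZMod (p*q), (if i = 0 then (1:ℝ) else 0)
      = ((p*q : ℕ) : ℝ) := by
    simp [Finset.sum_ite_eq, ZMod.card, Finset.card_univ]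
  have hsr : ∑ _i : ZMod (p*q), ∑ j : ZMod (p*q), (if j = 0 then (1:ℝ) else 0)
      = ((p*q : ℕ) : ℝ) := by
    simp [Finset.sum_ite_eq, ZMod.card, Finset.card_univ]
  rw [hrs, hsr]
  push_cast
  ring

variable {m : Type*} [Fintype m] [DecidableEq m]

private lemma charpoly_conj_aux {R : Type*} [CommRing R] (U B V : Matrix m m R)
    (hUV : U * V = 1) : (U * B * V).charpoly = B.charpoly := by
  have hdet : (U.map C) * (V.map C) = 1 := by
    rw [← Matrix.map_mul, hUV, Matrix.map_one _ (by simp) (by simp)]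
  have hch : Matrix.charmatrix (U * B * V) = U.map C * Matrix.charmatrix B * V.map C := by
    unfold Matrix.charmatrix
    rw [Matrix.mul_sub, Matrix.sub_mul]
    congr 1
    · rw [Matrix.mul_assoc, (Matrix.scalar_commute (X : R[X]) (Commute.all X) (V.map C)).eq,
        ← Matrix.mul_assoc, hdet, Matrix.one_mul]
    · simp [RingHom.mapMatrix_apply, Matrix.map_mul]
  unfold Matrix.charpoly
  rw [hch, Matrix.det_mul, Matrix.det_mul, mul_right_comm, ← Matrix.det_mul, hdet,
    Matrix.det_one, one_mul]

private lemma charpoly_diagonal {R : Type*} [CommRing R] (d : m → R) :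
    (Matrix.diagonal d).charpoly = ∏ i, (X - C (d i)) := by
  unfold Matrix.charpoly
  have : Matrix.charmatrix (Matrix.diagonal d) = Matrix.diagonal (fun i => X - C (d i)) := by
    refine Matrix.ext (fun i j => ?_)
    by_cases h : i = j
    · subst h
      rw [Matrix.charmatrix_apply_eq, Matrix.diagonal_apply_eq, Matrix.diagonal_apply_eq]
    · rw [Matrix.charmatrix_apply_ne _ _ _ h, Matrix.diagonal_apply_ne _ h,
        Matrix.diagonal_apply_ne _ h, map_zero, neg_zero]
  rw [this, Matrix.det_diagonal]

private lemma herm_charpoly (A : Matrix m m ℝ) (hA : A.IsHermitian) :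
    A.charpoly = ∏ i, (X - C (hA.eigenvalues i)) := by
  have hsp := hA.spectral_theorem
  have hU : (hA.eigenvectorUnitary : Matrix m m ℝ)
      * (star hA.eigenvectorUnitary : Matrix m m ℝ) = 1 :=
    Matrix.mem_unitaryGroup_iff.mp hA.eigenvectorUnitary.2
  calc A.charpoly = ((hA.eigenvectorUnitary : Matrix m m ℝ) *
        Matrix.diagonal (RCLike.ofReal ∘ hA.eigenvalues) *
        (star hA.eigenvectorUnitary : Matrix m m ℝ)).charpoly := by exact congrArg _ hsp
    _ = (Matrix.diagonal (RCLike.ofReal ∘ hA.eigenvalues)).charpoly := by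
        apply charpoly_conj_aux
        exact hU
    _ = ∏ i, (X - C (hA.eigenvalues i)) := by
        rw [charpoly_diagonal]
        simp [Function.comp]

private lemma herm_roots_sq_sum (A : Matrix m m ℝ) (hA : A.IsHermitian) :
    ((A.charpoly.roots.map (fun μ => μ^2)).sum) = ∑ i, (hA.eigenvalues i)^2 := by
  rw [herm_charpoly A hA]
  have : (∏ i, (X - C (hA.eigenvalues i))).roots
      = (Finset.univ.val.map hA.eigenvalues) := by
    have := Polynomial.roots_multiset_prod_X_sub_C (Finset.univ.val.map hA.eigenvalues)
    rw [← this]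
    congr 1
    rw [Multiset.map_map]
    rfl
  rw [this, Multiset.map_map]
  rw [Finset.sum]
  rfl

private lemma herm_trace_sq (A : Matrix m m ℝ) (hA : A.IsHermitian) :
    Matrix.trace (A * A) = ∑ i, (hA.eigenvalues i)^2 := by
  have hsp := hA.spectral_theorem
  have hU : (star hA.eigenvectorUnitary : Matrix m m ℝ)
      * (hA.eigenvectorUnitary : Matrix m m ℝ) = 1 :=
    Matrix.mem_unitaryGroup_iff'.mp hA.eigenvectorUnitary.2
  set V := (hA.eigenvectorUnitary : Matrix m m ℝ)
  set D := Matrix.diagonal (RCLike.ofReal ∘ hA.eigenvalues : m → ℝ)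
  have : A * A = V * (D * D) * star V := by
    rw [hsp]
    calc V * D * star V * (V * D * star V) = V * D * (star V * V) * D * star V := by
          noncomm_ring
      _ = V * (D * D) * star V := by rw [hU]; noncomm_ring
  rw [this, Matrix.trace_mul_cycle, ← Matrix.mul_assoc, hU, Matrix.one_mul]
  simp [D, Matrix.diagonal_mul_diagonal, Matrix.trace_diagonal, Function.comp, sq]

end Auxiliary

open scoped Classical in
/-- The trace of the square of the adjacency matrix of the power graph of `D_{2pq}`,
and the sum of the squares of its eigenvalues. -/
theorem trace_adj_sq_dihedral (p q : ℕ) (hp : p.Prime) (hq : q.Prime) (hpq : p ≠ q)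
    [NeZero (p * q)] :
    Matrix.trace ((powerGraph (DihedralGroup (p * q))).adjMatrix ℝ
        * (powerGraph (DihedralGroup (p * q))).adjMatrix ℝ)
      = ((2 * p * q - 1 : ℝ) + (p - 1) * (q - 1) * (p * q - 1) + (q - 1) * (p * q - p)
          + (p - 1) * (p * q - q) + p * q) ∧
    ((((powerGraph (DihedralGroup (p * q))).adjMatrix ℝ).charpoly.roots.map
        (fun μ => μ ^ 2)).sum)
      = ((2 * p * q - 1 : ℝ) + (p - 1) * (q - 1) * (p * q - 1) + (q - 1) * (p * q - p)
          + (p - 1) * (p * q - q) + p * q) := by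
  have htr := main_trace p q hp hq hpq
  refine ⟨htr, ?_⟩
  have hA : ((powerGraph (DihedralGroup (p * q))).adjMatrix ℝ).IsHermitian := by
    unfold Matrix.IsHermitian
    refine Matrix.ext (fun i j => ?_)
    simp [Matrix.conjTranspose_apply, SimpleGraph.adj_comm]
  rw [herm_roots_sq_sum _ hA, ← herm_trace_sq _ hA]
  exact htr
end
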